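/- Let C''(c) be the (n+1)×(n+1) matrix with entries C''_{ij} = 1/(1 - xᵢyⱼ) for 1 ≤ i,j ≤ n, C''_{i,n+1} = 1/(1 - xᵢz), C''_{n+1,j} = 1/(1 - yⱼz), and C''_{n+1,n+1} = (1-c)/(1-z²). Then the coefficient of c⁰ in det C''(c) equals [∏_{1≤i<j≤n}(xᵢ-xⱼ)(yᵢ-yⱼ) · ∏_{i=1}^n (xᵢ-z)(yᵢ-z)] / [∏_{i,j=1}^n (1-xᵢyⱼ) · ∏_{i=1}^n (1-xᵢz)(1-yᵢz) · (1-z²)]. -/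

import Mathlib

open Finset Matrix


open Finset in
lemma pairs_split {M : Type*} [CommMonoid M] (N : ℕ) (f : Fin (N+1) → Fin (N+1) → M) :
    ∏ p ∈ univ.filter (fun p : Fin (N+1) × Fin (N+1) => p.1 < p.2), f p.1 p.2 =
      (∏ p ∈ univ.filter (fun p : Fin N × Fin N => p.1 < p.2),
        f p.1.castSucc p.2.castSucc) * ∏ i : Fin N, f i.castSucc (Fin.last N) := by
  rw [← Finset.prod_filter_mul_prod_filter_not
    (univ.filter (fun p : Fin (N+1) × Fin (N+1) => p.1 < p.2)) (fun p => p.2 = Fin.last N),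
    mul_comm]
  congr 1
  · rw [Finset.filter_filter]
    refine (Finset.prod_bij (fun (p : Fin N × Fin N) _ =>
      ((p.1.castSucc, p.2.castSucc) : Fin (N+1) × Fin (N+1))) ?_ ?_ ?_ ?_).symm
    · intro p hp
      simp only [mem_filter, mem_univ, true_and] at hp ⊢
      exact ⟨by simpa using hp, (Fin.castSucc_lt_last _).ne⟩
    · intro a _ b _ h; simpa [Prod.ext_iff, Fin.castSucc_inj, Prod.ext_iff] using h
    · intro p hp
      simp only [mem_filter, mem_univ, true_and] at hp
      obtain ⟨h1, h2⟩ := hp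
      have h2' : p.1 ≠ Fin.last N := fun h => h2 (le_antisymm (Fin.le_last _) (h ▸ h1.le))
      refine ⟨(p.1.castPred h2', p.2.castPred h2), by simp only [mem_filter, mem_univ, true_and, Fin.lt_def, Fin.coe_castPred]; exact h1, ?_⟩
      ext <;> simp
    · intros; rfl
  · rw [Finset.filter_filter]
    refine (Finset.prod_bij (fun (i : Fin N) _ => ((i.castSucc, Fin.last N) : Fin (N+1) × Fin (N+1))) ?_ ?_ ?_ ?_).symm
    · intro a _; simp [Fin.castSucc_lt_last]
    · intro a _ b _ h; simpa [Prod.ext_iff] using h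
    · intro p hp
      simp only [mem_filter, mem_univ, true_and] at hp
      obtain ⟨h1, h2⟩ := hp
      refine ⟨(p.1.castPred (fun h => absurd h1 (by rw [h, h2]; exact lt_irrefl _))), mem_univ _, ?_⟩
      ext <;> simp [h2.symm]
    · intros; rfl


lemma cauchy_det {K : Type*} [Field K] : ∀ (m : ℕ) (u v : Fin m → K),
    (∀ i j, 1 - u i * v j ≠ 0) →
    Matrix.det (Matrix.of fun i j => 1/(1 - u i * v j)) =
      (∏ p ∈ univ.filter (fun p : Fin m × Fin m => p.1 < p.2),
        (u p.1 - u p.2) * (v p.1 - v p.2)) / ∏ i, ∏ j, (1 - u i * v j) := by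
  intro m
  induction m with
  | zero => intro u v h; simp [Matrix.det_fin_zero]
  | succ m ih =>
    intro u v h
    set a := u (Fin.last m) with ha
    set b := v (Fin.last m) with hb
    set u' : Fin m → K := fun i => u i.castSucc with hu'
    set v' : Fin m → K := fun j => v j.castSucc with hv'
    -- block decomposition
    have key : (Matrix.of fun i j => 1/(1 - u i * v j)).det =
        (Matrix.fromBlocks
          (Matrix.of fun i j : Fin m => 1/(1 - u' i * v' j))
          (Matrix.of fun (i : Fin m) (_ : Fin 1) => 1/(1 - u' i * b))
          (Matrix.of fun (_ : Fin 1) (j : Fin m) => 1/(1 - a * v' j))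
          (Matrix.of fun (_ _ : Fin 1) => 1/(1 - a * b))).det := by
      rw [← Matrix.det_submatrix_equiv_self (finSumFinEquiv : Fin m ⊕ Fin 1 ≃ Fin (m+1))]
      congr 1
      ext i j
      cases i with
      | inl i =>
        cases j with
        | inl j => rfl
        | inr j => have hj : j = 0 := Subsingleton.elim _ _; subst hj; rfl
      | inr i =>
        have hi : i = 0 := Subsingleton.elim _ _; subst hi
        cases j with
        | inl j => rfl
        | inr j => have hj : j = 0 := Subsingleton.elim _ _; subst hj; rfl
    have hne : ∀ (i j : Fin m), 1 - u' i * v' j ≠ 0 := fun i j => h _ _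
    have hub : ∀ i, 1 - u' i * b ≠ 0 := fun i => h _ _
    have hav : ∀ j, 1 - a * v' j ≠ 0 := fun j => h _ _
    have hab : 1 - a * b ≠ 0 := h _ _
    set A : Matrix (Fin m) (Fin m) K := Matrix.of fun i j => 1/(1 - u' i * v' j) with hA
    set B : Matrix (Fin m) (Fin 1) K := Matrix.of fun i _ => 1/(1 - u' i * b) with hB
    set Cm : Matrix (Fin 1) (Fin m) K := Matrix.of fun _ j => 1/(1 - a * v' j) with hCm
    set D : Matrix (Fin 1) (Fin 1) K := Matrix.of fun _ _ => 1/(1 - a * b) with hD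
    set E : Matrix (Fin 1) (Fin 1) K := Matrix.of fun _ _ => (1 - a * b) with hE
    have hDE : D * E = 1 := by
      ext i j
      have hi : i = 0 := Subsingleton.elim _ _
      have hj : j = 0 := Subsingleton.elim _ _
      subst hi; subst hj
      simp [hD, hE, Matrix.mul_apply, Fin.sum_univ_one, one_div, inv_mul_cancel₀ hab]
    have hED : E * D = 1 := by
      ext i j
      have hi : i = 0 := Subsingleton.elim _ _
      have hj : j = 0 := Subsingleton.elim _ _
      subst hi; subst hj
      simp [hD, hE, Matrix.mul_apply, Fin.sum_univ_one, one_div, mul_inv_cancel₀ hab]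
    haveI : Invertible D := ⟨E, hED, hDE⟩
    have hinvD : (⅟D : Matrix (Fin 1) (Fin 1) K) = E := invOf_eq_right_inv hDE
    set r : Fin m → K := fun i => (u' i - a)/(1 - u' i * b) with hr
    set c : Fin m → K := fun j => (v' j - b)/(1 - a * v' j) with hc
    have schur : A - B * ⅟D * Cm =
        Matrix.diagonal r * (Matrix.of fun i j => 1/(1 - u' i * v' j)) * Matrix.diagonal c := by
      rw [hinvD]
      ext i j
      rw [Matrix.mul_diagonal, Matrix.diagonal_mul]
      have n1 := hne i j
      have n2 := hub i
      have n3 := hav j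
      have n4 : 1 - v' j * a ≠ 0 := by rw [mul_comm]; exact n3
      simp only [Matrix.sub_apply, Matrix.mul_apply, Fin.sum_univ_one, hA, hB, hCm, hE,
        Matrix.of_apply, hr, hc]
      field_simp
      ring
    rw [key, Matrix.det_fromBlocks₂₂, schur, Matrix.det_mul, Matrix.det_mul,
      Matrix.det_diagonal, Matrix.det_diagonal, ih u' v' hne]
    have hDdet : D.det = 1/(1 - a*b) := by simp [hD, Matrix.det_fin_one]
    rw [hDdet]
    -- now pure algebra with products
    have e1 : (∏ p ∈ univ.filter (fun p : Fin (m+1) × Fin (m+1) => p.1 < p.2),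
          (u p.1 - u p.2) * (v p.1 - v p.2)) =
        (∏ p ∈ univ.filter (fun p : Fin m × Fin m => p.1 < p.2),
          (u' p.1 - u' p.2) * (v' p.1 - v' p.2)) * ∏ i : Fin m, (u' i - a) * (v' i - b) :=
      pairs_split m (fun i j => (u i - u j) * (v i - v j))
    rw [e1]
    have hQ : ∏ i : Fin (m+1), ∏ j : Fin (m+1), (1 - u i * v j) =
        ((∏ i : Fin m, ∏ j : Fin m, (1 - u' i * v' j)) * ∏ i : Fin m, (1 - u' i * b)) *
          ((∏ j : Fin m, (1 - a * v' j)) * (1 - a * b)) := by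
      rw [Fin.prod_univ_castSucc (f := fun i => ∏ j : Fin (m+1), (1 - u i * v j))]
      congr 1
      · rw [← Finset.prod_mul_distrib]
        exact Finset.prod_congr rfl fun i _ =>
          Fin.prod_univ_castSucc (f := fun j => (1 - u i.castSucc * v j))
      · exact Fin.prod_univ_castSucc (f := fun j => (1 - u (Fin.last m) * v j))
    rw [hQ]
    simp only [hr, hc]
    rw [Finset.prod_div_distrib, Finset.prod_div_distrib]
    have hPub : (∏ i : Fin m, (1 - u' i * b)) ≠ 0 := Finset.prod_ne_zero_iff.mpr fun i _ => hub i
    have hPav : (∏ j : Fin m, (1 - a * v' j)) ≠ 0 := Finset.prod_ne_zero_iff.mpr fun j _ => hav j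
    have hPQ : (∏ i : Fin m, ∏ j : Fin m, (1 - u' i * v' j)) ≠ 0 :=
      Finset.prod_ne_zero_iff.mpr fun i _ => Finset.prod_ne_zero_iff.mpr fun j _ => hne i j
    have hsplitnum : (∏ i : Fin m, ((u' i - a) * (v' i - b)))
        = (∏ i : Fin m, (u' i - a)) * ∏ i : Fin m, (v' i - b) := Finset.prod_mul_distrib
    rw [hsplitnum]
    field_simp



open Polynomial in
/-- The bordered Cauchy matrix `C''(c)`, with `c` an indeterminate (`Polynomial.X`). -/
noncomputable def CppMat (n : ℕ) {K : Type*} [Field K] (x y : Fin n → K) (z : K) :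
    Matrix (Fin (n+1)) (Fin (n+1)) (Polynomial K) :=
  Matrix.of fun i j =>
    if hi : (i : ℕ) < n then
      if hj : (j : ℕ) < n then C (1 / (1 - x ⟨i, hi⟩ * y ⟨j, hj⟩))
      else C (1 / (1 - x ⟨i, hi⟩ * z))
    else
      if hj : (j : ℕ) < n then C (1 / (1 - y ⟨j, hj⟩ * z))
      else C (1 / (1 - z^2)) * (1 - X)

/-- the coefficient of `c⁰` in `det C''(c)`. -/
theorem stmt2 (n : ℕ) {K : Type*} [Field K] (x y : Fin n → K) (z : K)
    (hxy : ∀ i j, 1 - x i * y j ≠ 0) (hxz : ∀ i, 1 - x i * z ≠ 0)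
    (hyz : ∀ j, 1 - y j * z ≠ 0) (hz : 1 - z^2 ≠ 0) :
    (Matrix.det (CppMat n x y z)).coeff 0 =
      ((∏ p ∈ Finset.univ.filter (fun p : Fin n × Fin n => p.1 < p.2),
          (x p.1 - x p.2) * (y p.1 - y p.2)) *
        ∏ i, (x i - z) * (y i - z)) /
      ((∏ i, ∏ j, (1 - x i * y j)) * (∏ i, (1 - x i * z) * (1 - y i * z)) * (1 - z^2)) := by
  set u : Fin (n+1) → K := Fin.snoc x z with hu
  set v : Fin (n+1) → K := Fin.snoc y z with hv
  have hu' : ∀ i : Fin (n+1), u i = if h : (i:ℕ) < n then x ⟨i,h⟩ else z := by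
    intro i
    by_cases h : (i:ℕ) < n
    · rw [dif_pos h]
      have : i = Fin.castSucc ⟨i, h⟩ := by ext; rfl
      conv_lhs => rw [this, hu, Fin.snoc_castSucc]
    · rw [dif_neg h]
      have hlt := i.isLt
      have : i = Fin.last n := by ext; simp [Fin.last]; omega
      rw [this, hu, Fin.snoc_last]
  have hv' : ∀ j : Fin (n+1), v j = if h : (j:ℕ) < n then y ⟨j,h⟩ else z := by
    intro j
    by_cases h : (j:ℕ) < n
    · rw [dif_pos h]
      have : j = Fin.castSucc ⟨j, h⟩ := by ext; rfl
      conv_lhs => rw [this, hv, Fin.snoc_castSucc]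
    · rw [dif_neg h]
      have hlt := j.isLt
      have : j = Fin.last n := by ext; simp [Fin.last]; omega
      rw [this, hv, Fin.snoc_last]
  have hne : ∀ i j, 1 - u i * v j ≠ 0 := by
    intro i j
    rw [hu' i, hv' j]
    by_cases hi : (i:ℕ) < n <;> by_cases hj : (j:ℕ) < n
    · rw [dif_pos hi, dif_pos hj]; exact hxy _ _
    · rw [dif_pos hi, dif_neg hj]; exact hxz _
    · rw [dif_neg hi, dif_pos hj, mul_comm]; exact hyz _
    · rw [dif_neg hi, dif_neg hj, ← sq]; exact hz
  have hmap : (CppMat n x y z).map (Polynomial.evalRingHom (0:K)) =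
      Matrix.of fun i j => 1/(1 - u i * v j) := by
    ext i j
    simp only [Matrix.map_apply, CppMat, Matrix.of_apply]
    rw [hu' i, hv' j]
    by_cases hi : (i:ℕ) < n <;> by_cases hj : (j:ℕ) < n
    · rw [dif_pos hi, dif_pos hi, dif_pos hj, dif_pos hj]; simp
    · rw [dif_pos hi, dif_pos hi, dif_neg hj, dif_neg hj]; simp
    · rw [dif_neg hi, dif_neg hi, dif_pos hj, dif_pos hj]; simp [mul_comm]
    · rw [dif_neg hi, dif_neg hi, dif_neg hj, dif_neg hj]; simp [sq]
  have hcoe : (Matrix.det (CppMat n x y z)).coeff 0 =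
      (Matrix.of fun i j => 1/(1 - u i * v j)).det := by
    rw [Polynomial.coeff_zero_eq_eval_zero, ← Polynomial.coe_evalRingHom, RingHom.map_det, RingHom.mapMatrix_apply, hmap]
  rw [hcoe, cauchy_det (n+1) u v hne]
  have e1 : (∏ p ∈ Finset.univ.filter (fun p : Fin (n+1) × Fin (n+1) => p.1 < p.2),
        (u p.1 - u p.2) * (v p.1 - v p.2)) =
      (∏ p ∈ Finset.univ.filter (fun p : Fin n × Fin n => p.1 < p.2),
        (x p.1 - x p.2) * (y p.1 - y p.2)) * ∏ i : Fin n, (x i - z) * (y i - z) := by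
    rw [pairs_split n (fun i j => (u i - u j) * (v i - v j))]
    congr 1
    · refine Finset.prod_congr rfl fun p _ => ?_
      simp [hu, hv, Fin.snoc_castSucc]
    · refine Finset.prod_congr rfl fun i _ => ?_
      simp [hu, hv, Fin.snoc_castSucc, Fin.snoc_last]
  have hQ : (∏ i : Fin (n+1), ∏ j : Fin (n+1), (1 - u i * v j)) =
      ((∏ i : Fin n, ∏ j : Fin n, (1 - x i * y j)) * ∏ i : Fin n, (1 - x i * z)) *
        ((∏ j : Fin n, (1 - z * y j)) * (1 - z * z)) := by
    rw [Fin.prod_univ_castSucc (f := fun i => ∏ j : Fin (n+1), (1 - u i * v j))]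
    congr 1
    · rw [← Finset.prod_mul_distrib]
      refine Finset.prod_congr rfl fun i _ => ?_
      rw [Fin.prod_univ_castSucc (f := fun j => (1 - u i.castSucc * v j))]
      simp [hu, hv, Fin.snoc_castSucc, Fin.snoc_last]
    · rw [Fin.prod_univ_castSucc (f := fun j => (1 - u (Fin.last n) * v j))]
      simp [hu, hv, Fin.snoc_castSucc, Fin.snoc_last]
  rw [e1, hQ]
  congr 1
  rw [Finset.prod_mul_distrib]
  have : (∏ j : Fin n, (1 - z * y j)) = ∏ j : Fin n, (1 - y j * z) :=
    Finset.prod_congr rfl (fun j _ => by ring)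
  rw [this]; ring
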